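/- Let α ∈ (0,C)^N with Σᵢ yᵢαᵢ = 0 be a minimizer of f(α) = (1/2)Σᵢⱼ yᵢyⱼαᵢαⱼKᵢⱼ + CΣᵢG(αᵢ/C) − λΣᵢαᵢ subject to Σᵢ yᵢαᵢ = 0, where G(δ) = δ log δ + (1−δ) log(1−δ). Then there exists ψ ∈ ℝ such that for every i, λ − yᵢ·Σⱼ αⱼyⱼKᵢⱼ + yᵢψ = log((αᵢ/C)/(1 − αᵢ/C)). -/

import Mathlib

theorem kkt_stationarity
    (N : ℕ) (hN : 1 ≤ N) (y : Fin N → ℝ) (hy : ∀ i, y i = 1 ∨ y i = -1)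
    (K : Matrix (Fin N) (Fin N) ℝ) (hKsymm : K.IsSymm)
    (hKpsd : ∀ v : Fin N → ℝ, 0 ≤ ∑ i, ∑ j, v i * K i j * v j)
    (C : ℝ) (hC : 0 < C) (lam : ℝ)
    (f : (Fin N → ℝ) → ℝ)
    (hf : ∀ α : Fin N → ℝ,
      f α = (1 / 2) * ∑ i, ∑ j, y i * y j * α i * α j * K i j
          + C * ∑ i, ((α i / C) * Real.log (α i / C)
              + (1 - α i / C) * Real.log (1 - α i / C))
          - lam * ∑ i, α i)
    (α : Fin N → ℝ) (hbox : ∀ i, α i ∈ Set.Ioo 0 C)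
    (hfeas : ∑ i, y i * α i = 0)
    (hmin : ∀ β : Fin N → ℝ, (∀ i, β i ∈ Set.Ioo 0 C) → ∑ i, y i * β i = 0 →
      f α ≤ f β) :
    ∃ ψ : ℝ, ∀ i,
      lam - y i * (∑ j, α j * y j * K i j) + y i * ψ
        = Real.log ((α i / C) / (1 - α i / C)) := by
  -- basic facts about α
  have hu0 : ∀ k, α k / C ≠ 0 := fun k => ne_of_gt (div_pos (hbox k).1 hC)
  have hu1 : ∀ k, 1 - α k / C ≠ 0 := by
    intro k
    have : α k / C < 1 := (div_lt_one hC).mpr (hbox k).2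
    linarith
  have hu1pos : ∀ k, 0 < 1 - α k / C := by
    intro k
    have : α k / C < 1 := (div_lt_one hC).mpr (hbox k).2
    linarith
  set g : Fin N → ℝ := fun k =>
    y k * (∑ q, α q * y q * K k q) +
      (Real.log (α k / C) - Real.log (1 - α k / C)) - lam with hg
  -- key: for any direction v with y·v = 0, the directional derivative ∑ v k * g k = 0
  have key : ∀ v : Fin N → ℝ, (∑ k, y k * v k) = 0 → (∑ k, v k * g k) = 0 := by
    intro v hv
    have ha : ∀ k, HasDerivAt (fun t : ℝ => α k + t * v k) (v k) 0 :=
      fun k => (hasDerivAt_mul_const (v k)).const_add (α k)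
    -- local min
    have hloc : IsLocalMin (fun t : ℝ => f (fun k => α k + t * v k)) 0 := by
      have hbox' : ∀ᶠ t : ℝ in nhds 0, ∀ k, α k + t * v k ∈ Set.Ioo 0 C := by
        rw [Filter.eventually_all]
        intro k
        have hc : ContinuousAt (fun t : ℝ => α k + t * v k) 0 := by fun_prop
        have := hc.eventually_mem (isOpen_Ioo.mem_nhds (by simpa using hbox k))
        simpa using this
      filter_upwards [hbox'] with t ht
      have h0 : (fun k => α k + (0:ℝ) * v k) = α := by funext k; ring
      simp only [h0]
      apply hmin _ ht
      have : ∑ k, y k * (α k + t * v k) = ∑ k, y k * α k + t * ∑ k, y k * v k := by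
        rw [Finset.mul_sum, ← Finset.sum_add_distrib]
        exact Finset.sum_congr rfl fun k _ => by ring
      rw [this, hfeas, hv]; ring
    -- derivative
    have hD : HasDerivAt (fun t : ℝ => f (fun k => α k + t * v k)) (∑ k, v k * g k) 0 := by
      have hEq : (fun t : ℝ => f (fun k => α k + t * v k)) =
          (fun t : ℝ =>
            (1 / 2) * ∑ p, ∑ q, y p * y q * (α p + t * v p) * (α q + t * v q) * K p q
            + C * ∑ k, (((α k + t * v k) / C) * Real.log ((α k + t * v k) / C)
                + (1 - (α k + t * v k) / C) * Real.log (1 - (α k + t * v k) / C))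
            - lam * ∑ k, (α k + t * v k)) := funext fun t => hf _
      rw [hEq]
      -- quadratic part
      have hQ : HasDerivAt
          (fun t : ℝ => ∑ p, ∑ q, y p * y q * (α p + t * v p) * (α q + t * v q) * K p q)
          (∑ p, ∑ q, (y p * y q * v p * (α q + 0 * v q)
              + y p * y q * (α p + 0 * v p) * v q) * K p q) 0 := by
        apply HasDerivAt.fun_sum
        intro p _
        apply HasDerivAt.fun_sum
        intro q _
        exact ((((ha p).const_mul (y p * y q)).mul (ha q)).mul_const (K p q))
      -- entropy part
      have hE : HasDerivAt
          (fun t : ℝ => ∑ k, (((α k + t * v k) / C) * Real.log ((α k + t * v k) / C)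
              + (1 - (α k + t * v k) / C) * Real.log (1 - (α k + t * v k) / C)))
          (∑ k, ((v k / C) * Real.log ((α k + 0 * v k) / C)
              + ((α k + 0 * v k) / C) * ((v k / C) / ((α k + 0 * v k) / C))
              + ((-(v k / C)) * Real.log (1 - (α k + 0 * v k) / C)
                + (1 - (α k + 0 * v k) / C) * ((-(v k / C)) / (1 - (α k + 0 * v k) / C))))) 0 := by
        apply HasDerivAt.fun_sum
        intro k _
        have hA : HasDerivAt (fun t : ℝ => (α k + t * v k) / C) (v k / C) 0 :=
          (ha k).div_const C
        have hApos : (α k + 0 * v k) / C ≠ 0 := by simpa using hu0 k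
        have hB : HasDerivAt (fun t : ℝ => 1 - (α k + t * v k) / C) (-(v k / C)) 0 :=
          hA.const_sub 1
        have hBpos : 1 - (α k + 0 * v k) / C ≠ 0 := by simpa using hu1 k
        exact (hA.mul (hA.log hApos)).add (hB.mul (hB.log hBpos))
      -- linear part
      have hL : HasDerivAt (fun t : ℝ => ∑ k, (α k + t * v k)) (∑ k, v k) 0 :=
        HasDerivAt.fun_sum fun k _ => ha k
      have := ((hQ.const_mul (1/2 : ℝ)).add (hE.const_mul C)).sub (hL.const_mul lam)
      convert this using 1
      · rfl
      · rfl
      · rfl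
      -- value equality
      simp only [zero_mul, add_zero]
      have hquad : ∑ p, ∑ q, (y p * y q * v p * α q + y p * y q * α p * v q) * K p q
          = 2 * ∑ p, v p * (y p * (∑ q, α q * y q * K p q)) := by
        have hswap : ∑ p, ∑ q, (y p * y q * α p * v q) * K p q
            = ∑ p, ∑ q, (y p * y q * v p * α q) * K p q := by
          rw [Finset.sum_comm]
          exact Finset.sum_congr rfl fun p _ => Finset.sum_congr rfl fun q _ => by
            rw [hKsymm.apply p q]; ring
        calc ∑ p, ∑ q, (y p * y q * v p * α q + y p * y q * α p * v q) * K p q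
            = ∑ p, ∑ q, ((y p * y q * v p * α q) * K p q + (y p * y q * α p * v q) * K p q) := by
              exact Finset.sum_congr rfl fun p _ => Finset.sum_congr rfl fun q _ => by ring
          _ = (∑ p, ∑ q, (y p * y q * v p * α q) * K p q)
              + ∑ p, ∑ q, (y p * y q * α p * v q) * K p q := by
              rw [← Finset.sum_add_distrib]
              exact Finset.sum_congr rfl fun p _ => by rw [Finset.sum_add_distrib]
          _ = 2 * ∑ p, ∑ q, (y p * y q * v p * α q) * K p q := by rw [hswap]; ring
          _ = 2 * ∑ p, v p * (y p * (∑ q, α q * y q * K p q)) := by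
              congr 1
              exact Finset.sum_congr rfl fun p _ => by
                rw [Finset.mul_sum, Finset.mul_sum]
                exact Finset.sum_congr rfl fun q _ => by ring
      have hent : ∑ k, ((v k / C) * Real.log (α k / C)
              + (α k / C) * ((v k / C) / (α k / C))
              + ((-(v k / C)) * Real.log (1 - α k / C)
                + (1 - α k / C) * ((-(v k / C)) / (1 - α k / C))))
          = ∑ k, (v k / C) * (Real.log (α k / C) - Real.log (1 - α k / C)) := by
        apply Finset.sum_congr rfl
        intro k _
        rw [mul_div_cancel₀ _ (hu0 k), mul_div_cancel₀ _ (hu1 k)]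
        ring
      have hq2 : (1:ℝ)/2 * (∑ p, ∑ q, (y p * y q * v p * α q + y p * y q * α p * v q) * K p q)
          = ∑ p, v p * (y p * (∑ q, α q * y q * K p q)) := by
        rw [hquad]; ring
      rw [hq2, hent]
      simp only [hg, Finset.mul_sum]
      rw [← Finset.sum_add_distrib, ← Finset.sum_sub_distrib]
      apply Finset.sum_congr rfl
      intro k _
      field_simp
      rw [mul_sub, mul_add, Finset.mul_sum]
      ring
    have := hloc.hasDerivAt_eq_zero hD
    exact this
  -- choose base index
  have hy2 : ∀ k, y k * y k = 1 := by
    intro k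
    rcases hy k with h | h <;> rw [h] <;> norm_num
  have hyne : ∀ k, y k ≠ 0 := by
    intro k
    rcases hy k with h | h <;> rw [h] <;> norm_num
  set i0 : Fin N := ⟨0, hN⟩
  refine ⟨y i0 * g i0, ?_⟩
  intro i
  -- show g i = y i * (y i0 * g i0)
  have hgi : g i = y i * (y i0 * g i0) := by
    by_cases hii : i = i0
    · rw [hii]
      rw [← mul_assoc, hy2 i0, one_mul]
    · -- direction v := (y i0) e_i - (y i) e_{i0}
      set v : Fin N → ℝ := fun k => if k = i then y i0 else if k = i0 then -(y i) else 0 with hvdef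
      have hvsum : ∑ k, y k * v k = 0 := by
        have : ∀ k, y k * v k = (if k = i then y i * y i0 else 0)
            + (if k = i0 then -(y i0 * y i) else 0) := by
          intro k
          by_cases h1 : k = i
          · subst h1
            simp [hvdef, hii]
          · by_cases h2 : k = i0
            · subst h2; simp [hvdef, h1]
            · simp [hvdef, h1, h2]
        rw [Finset.sum_congr rfl fun k _ => this k, Finset.sum_add_distrib,
          Finset.sum_ite_eq' _ i, Finset.sum_ite_eq' _ i0]
        simp; ring
      have hkey := key v hvsum
      have : ∀ k, v k * g k = (if k = i then y i0 * g i else 0)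
          + (if k = i0 then -(y i * g i0) else 0) := by
        intro k
        by_cases h1 : k = i
        · subst h1; simp [hvdef, hii]
        · by_cases h2 : k = i0
          · subst h2; simp [hvdef, h1]
          · simp [hvdef, h1, h2]
      rw [Finset.sum_congr rfl fun k _ => this k, Finset.sum_add_distrib,
        Finset.sum_ite_eq' _ i, Finset.sum_ite_eq' _ i0] at hkey
      simp at hkey
      -- hkey : y i0 * g i - y i * g i0 = 0 (roughly)
      have h1 : y i0 * g i = y i * g i0 := by linarith [hkey]
      have := congrArg (fun x => y i0 * x) h1
      simp only [← mul_assoc] at this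
      rw [hy2 i0, one_mul] at this
      rw [this]; ring
  -- now unpack g i
  rw [hg] at hgi
  simp only [] at hgi
  have hlog : Real.log ((α i / C) / (1 - α i / C))
      = Real.log (α i / C) - Real.log (1 - α i / C) :=
    Real.log_div (hu0 i) (hu1 i)
  rw [hlog]
  -- hgi : y i * S i + (log..-log..) - lam = y i * ψ
  have := hgi
  nlinarith [hgi, hy2 i]
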